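/- Let 𝔡 = {D^0,…,D^{M−1}} be an (M,M,N2)-complete complementary code with sequences d^l_n of length N2, and let x, y be arbitrary complex sequences of length N1. Then for all 0 ≤ n1, n2 ≤ M−1 and every shift τ0 = k1·N2 + k2 with 0 ≤ k1 ≤ N1−1 and 0 ≤ k2 ≤ N2−1: Σ_{l=0}^{M−1} C_{x⊗d^l_{n1}, y⊗d^l_{n2}}(τ0) equals M·N2·C_{x,y}(k1) if k2 = 0 and n1 = n2, equals 0 if k2 ≠ 0 and n1 = n2, and equals 0 for all k2 when n1 ≠ n2. -/

import Mathlib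

open Finset

/-- Aperiodic cross-correlation of length-`L` complex sequences at shift `0 ≤ τ`. -/
noncomputable def aCorr (a b : ℕ → ℂ) (L τ : ℕ) : ℂ :=
  ∑ k ∈ Finset.range (L - τ), a k * (starRingEnd ℂ) (b (k + τ))

/-- Periodic cross-correlation of length-`L` complex sequences at shift `τ`. -/
noncomputable def pCorr (a b : ℕ → ℂ) (L τ : ℕ) : ℂ :=
  ∑ k ∈ Finset.range L, a k * (starRingEnd ℂ) (b ((k + τ) % L))

/-- Kronecker product of a sequence `x` (length `N1`) with a sequence `y` of length `N2`:
`(x ⊗ y) (k*N2 + l) = x k * y l`. -/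
noncomputable def kron (x y : ℕ → ℂ) (N2 : ℕ) : ℕ → ℂ :=
  fun n => x (n / N2) * y (n % N2)

open Polynomial

noncomputable def Fp (a : ℕ → ℂ) (N : ℕ) : Polynomial ℂ :=
  ∑ k ∈ Finset.range N, Polynomial.C (a k) * Polynomial.X ^ k

noncomputable def Gp (b : ℕ → ℂ) (N : ℕ) : Polynomial ℂ :=
  Fp (fun k => (starRingEnd ℂ) (b (N - 1 - k))) N

lemma Fp_coeff (a : ℕ → ℂ) (N i : ℕ) :
    (Fp a N).coeff i = if i < N then a i else 0 := by
  simp [Fp, finset_sum_coeff, coeff_C_mul, coeff_X_pow, Finset.sum_ite_eq]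

lemma FG_coeff_lo (a b : ℕ → ℂ) (N τ : ℕ) (hτ : τ < N) :
    (Fp a N * Gp b N).coeff (N - 1 - τ) = aCorr a b N τ := by
  rw [coeff_mul, Finset.Nat.sum_antidiagonal_eq_sum_range_succ_mk]
  rw [Nat.succ_eq_add_one]
  have h1 : N - 1 - τ + 1 = N - τ := by omega
  rw [h1, aCorr]
  apply Finset.sum_congr rfl
  intro i hi
  simp only [Finset.mem_range] at hi
  rw [Fp_coeff, Gp, Fp_coeff]
  have h2 : i < N := by omega
  have h3 : N - 1 - τ - i < N := by omega
  rw [if_pos h2, if_pos h3]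
  have e1 : N - 1 - (N - 1 - τ - i) = i + τ := by omega
  rw [e1]

lemma FG_coeff_hi (a b : ℕ → ℂ) (N τ : ℕ) (hτ1 : 1 ≤ τ) (hτ : τ < N) :
    (Fp a N * Gp b N).coeff (N - 1 + τ) = (starRingEnd ℂ) (aCorr b a N τ) := by
  rw [coeff_mul, Finset.Nat.sum_antidiagonal_eq_sum_range_succ_mk]
  rw [aCorr, map_sum]
  have key : ∀ i ∈ Finset.range (N - 1 + τ).succ,
      (Fp a N).coeff i * (Gp b N).coeff (N - 1 + τ - i) =
      if i ∈ Finset.Ico τ N then (Fp a N).coeff i * (Gp b N).coeff (N - 1 + τ - i) else 0 := by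
    intro i _
    split_ifs with h
    · rfl
    · rw [Fp_coeff, Gp, Fp_coeff]
      simp only [Finset.mem_Ico, not_and_or, not_le, not_lt] at h
      rcases h with h | h
      · have : ¬ (N - 1 + τ - i < N) := by omega
        rw [if_neg this, mul_zero]
      · rw [if_neg (by omega), zero_mul]
  rw [Finset.sum_congr rfl key, Finset.sum_ite_mem, Finset.inter_eq_right.mpr
    (by intro i hi; simp only [Finset.mem_Ico] at hi; simp only [Finset.mem_range]; omega)]
  rw [Finset.sum_Ico_eq_sum_range]
  apply Finset.sum_congr rfl
  intro k hk
  simp only [Finset.mem_range] at hk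
  rw [Fp_coeff, Gp, Fp_coeff, if_pos (by omega), if_pos (by omega)]
  have e1 : N - 1 - (N - 1 + τ - (τ + k)) = k := by omega
  rw [e1, map_mul, Complex.conj_conj]
  rw [show τ + k = k + τ by omega, mul_comm]

lemma FG_coeff_top (a b : ℕ → ℂ) (N e : ℕ) (he : 2 * N - 1 ≤ e) :
    (Fp a N * Gp b N).coeff e = 0 := by
  rw [coeff_mul]
  apply Finset.sum_eq_zero
  intro ij hij
  rw [Finset.HasAntidiagonal.mem_antidiagonal] at hij
  rw [Fp_coeff, Gp, Fp_coeff]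
  rcases Nat.lt_or_ge ij.1 N with h1 | h1
  · have h2 : ¬ ij.2 < N := by omega
    rw [if_neg h2, mul_zero]
  · rw [if_neg (Nat.not_lt.mpr h1), zero_mul]


lemma blockSum (f : ℕ → ℂ) (N : ℕ) : ∀ B, ∑ k ∈ Finset.range (B * N), f k =
    ∑ i ∈ Finset.range B, ∑ j ∈ Finset.range N, f (i * N + j)
  | 0 => by simp
  | B + 1 => by
    rw [Finset.sum_range_succ, ← blockSum f N B, add_mul, one_mul, Finset.range_eq_Ico,
      ← Finset.sum_Ico_consecutive f (Nat.zero_le _) (Nat.le_add_right (B * N) N),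
      ← Finset.range_eq_Ico, Finset.sum_Ico_eq_sum_range, Nat.add_sub_cancel_left]

lemma splitSum (f : ℕ → ℂ) (A N k2 : ℕ) (hA : 1 ≤ A) (hk2 : k2 ≤ N) :
    ∑ k ∈ Finset.range (A * N - k2), f k =
      (∑ i ∈ Finset.range (A - 1), ∑ j ∈ Finset.range N, f (i * N + j)) +
        ∑ j ∈ Finset.range (N - k2), f ((A - 1) * N + j) := by
  have e1 : (A - 1) * N + N = A * N := by
    obtain ⟨a, rfl⟩ : ∃ a, A = a + 1 := ⟨A - 1, by omega⟩
    simp only [Nat.add_sub_cancel]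
    ring
  have hle : (A - 1) * N ≤ A * N - k2 := by omega
  rw [Finset.range_eq_Ico, ← Finset.sum_Ico_consecutive f (Nat.zero_le _) hle,
    ← Finset.range_eq_Ico, blockSum, Finset.sum_Ico_eq_sum_range]
  congr 1
  have e2 : A * N - k2 - (A - 1) * N = N - k2 := by omega
  rw [e2]

lemma kron_apply (x w : ℕ → ℂ) (N2 : ℕ) (hN2 : 0 < N2) (i j : ℕ) (hj : j < N2) :
    kron x w N2 (i * N2 + j) = x i * w j := by
  unfold kron
  rw [show i * N2 + j = N2 * i + j by ring, Nat.mul_add_div hN2, Nat.mul_add_mod,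
    Nat.div_eq_of_lt hj, Nat.mod_eq_of_lt hj, add_zero]

section
variable (M N2 : ℕ) (d : ℕ → ℕ → ℕ → ℂ)

lemma FGsum_eq (hM : 0 < M) (hN2 : 0 < N2)
    (hCCC : ∀ l1 < M, ∀ l2 < M, ∀ τ < N2,
      ∑ n ∈ Finset.range M, aCorr (d l1 n) (d l2 n) N2 τ =
        if l1 = l2 ∧ τ = 0 then (M * N2 : ℂ) else 0)
    {l1 l2 : ℕ} (hl1 : l1 < M) (hl2 : l2 < M) :
    ∑ n ∈ Finset.range M, Fp (d l1 n) N2 * Gp (d l2 n) N2 =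
      if l1 = l2 then Polynomial.C ((M : ℂ) * N2) * Polynomial.X ^ (N2 - 1) else 0 := by
  apply Polynomial.ext
  intro e
  rw [finset_sum_coeff]
  have hRHS : (if l1 = l2 then Polynomial.C ((M : ℂ) * N2) * Polynomial.X ^ (N2 - 1)
      else (0 : Polynomial ℂ)).coeff e =
      if l1 = l2 ∧ e = N2 - 1 then (M * N2 : ℂ) else 0 := by
    by_cases h : l1 = l2
    · rw [if_pos h, coeff_C_mul, coeff_X_pow]
      by_cases he : e = N2 - 1
      · rw [if_pos he, mul_one, if_pos ⟨h, he⟩]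
      · rw [if_neg he, mul_zero, if_neg (fun hh => he hh.2)]
    · rw [if_neg h, if_neg (fun hh => h hh.1)]
      simp
  rw [hRHS]
  rcases Nat.lt_or_ge e N2 with he | he
  · have hτ : N2 - 1 - e < N2 := by omega
    have step : ∀ n ∈ Finset.range M,
        (Fp (d l1 n) N2 * Gp (d l2 n) N2).coeff e = aCorr (d l1 n) (d l2 n) N2 (N2 - 1 - e) := by
      intro n _
      have h := FG_coeff_lo (d l1 n) (d l2 n) N2 (N2 - 1 - e) hτ
      rwa [show N2 - 1 - (N2 - 1 - e) = e by omega] at h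
    rw [Finset.sum_congr rfl step, hCCC l1 hl1 l2 hl2 _ hτ]
    by_cases h12 : l1 = l2 ∧ N2 - 1 - e = 0
    · rw [if_pos h12, if_pos ⟨h12.1, by omega⟩]
    · rw [if_neg h12, if_neg (fun hh => h12 ⟨hh.1, by omega⟩)]
  · rcases Nat.lt_or_ge e (2 * N2 - 1) with he2 | he2
    · set τ := e - (N2 - 1) with hτdef
      have hτ1 : 1 ≤ τ := by omega
      have hτN : τ < N2 := by omega
      have step : ∀ n ∈ Finset.range M,
          (Fp (d l1 n) N2 * Gp (d l2 n) N2).coeff e =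
            (starRingEnd ℂ) (aCorr (d l2 n) (d l1 n) N2 τ) := by
        intro n _
        have h := FG_coeff_hi (d l1 n) (d l2 n) N2 τ hτ1 hτN
        rwa [show N2 - 1 + τ = e by omega] at h
      rw [Finset.sum_congr rfl step, ← map_sum, hCCC l2 hl2 l1 hl1 _ hτN]
      rw [if_neg (by omega : ¬(l2 = l1 ∧ τ = 0)), map_zero,
        if_neg (by omega : ¬(l1 = l2 ∧ e = N2 - 1))]
    · rw [Finset.sum_congr rfl (fun n _ => FG_coeff_top (d l1 n) (d l2 n) N2 e he2),
        Finset.sum_const_zero, if_neg (by omega : ¬(l1 = l2 ∧ e = N2 - 1))]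

lemma transposeCCC (hM : 0 < M) (hN2 : 0 < N2)
    (hCCC : ∀ l1 < M, ∀ l2 < M, ∀ τ < N2,
      ∑ n ∈ Finset.range M, aCorr (d l1 n) (d l2 n) N2 τ =
        if l1 = l2 ∧ τ = 0 then (M * N2 : ℂ) else 0) :
    ∀ n1 < M, ∀ n2 < M, ∀ τ < N2,
      ∑ l ∈ Finset.range M, aCorr (d l n1) (d l n2) N2 τ =
        if n1 = n2 ∧ τ = 0 then (M * N2 : ℂ) else 0 := by
  -- first the polynomial "column" identity
  have col : ∀ n1 < M, ∀ n2 < M,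
      ∑ l ∈ Finset.range M, Fp (d l n2) N2 * Gp (d l n1) N2 =
        if n1 = n2 then Polynomial.C ((M : ℂ) * N2) * Polynomial.X ^ (N2 - 1) else 0 := by
    intro n1 hn1 n2 hn2
    have evalid : ∀ z : ℂ, z ≠ 0 →
        (∑ l ∈ Finset.range M, Fp (d l n2) N2 * Gp (d l n1) N2).eval z =
          (if n1 = n2 then Polynomial.C ((M : ℂ) * N2) * Polynomial.X ^ (N2 - 1) else 0).eval z := by
      intro z hz
      set A : Matrix (Fin M) (Fin M) ℂ := fun l n => (Fp (d l n) N2).eval z with hA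
      set B : Matrix (Fin M) (Fin M) ℂ := fun n l => (Gp (d l n) N2).eval z with hB
      set c : ℂ := (M : ℂ) * N2 * z ^ (N2 - 1) with hc
      have hcne : c ≠ 0 := by
        apply mul_ne_zero (mul_ne_zero _ _) (pow_ne_zero _ hz)
        · exact_mod_cast Nat.cast_ne_zero.mpr hM.ne'
        · exact_mod_cast Nat.cast_ne_zero.mpr hN2.ne'
      have hAB : A * B = c • (1 : Matrix (Fin M) (Fin M) ℂ) := by
        ext l1 l2
        rw [Matrix.mul_apply]
        have : ∑ n : Fin M, A l1 n * B n l2 =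
            (∑ n ∈ Finset.range M, Fp (d l1 n) N2 * Gp (d l2 n) N2).eval z := by
          rw [eval_finset_sum, Finset.sum_range]
          apply Finset.sum_congr rfl
          intro n _
          rw [eval_mul]
        rw [this, FGsum_eq M N2 d hM hN2 hCCC l1.2 l2.2]
        simp only [Matrix.smul_apply, Matrix.one_apply, smul_eq_mul]
        by_cases h : (l1 : ℕ) = (l2 : ℕ)
        · rw [if_pos h, if_pos (Fin.ext h), eval_mul, eval_C, eval_pow, eval_X, mul_one, hc]
        · rw [if_neg h, if_neg (fun hh => h (congrArg Fin.val hh)), eval_zero, mul_zero]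
      have hBA : B * A = c • (1 : Matrix (Fin M) (Fin M) ℂ) := by
        have h1 : A * (c⁻¹ • B) = 1 := by
          rw [Matrix.mul_smul, hAB, smul_smul, inv_mul_cancel₀ hcne, one_smul]
        have h2 := mul_eq_one_comm.mp h1
        calc B * A = c • ((c⁻¹ • B) * A) := by
              rw [Matrix.smul_mul, smul_smul, mul_inv_cancel₀ hcne, one_smul]
          _ = c • 1 := by rw [h2]
      have := congrFun (congrFun hBA ⟨n1, hn1⟩) ⟨n2, hn2⟩
      rw [Matrix.mul_apply] at this
      have lhs : ∑ l : Fin M, B ⟨n1, hn1⟩ l * A l ⟨n2, hn2⟩ =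
          (∑ l ∈ Finset.range M, Fp (d l n2) N2 * Gp (d l n1) N2).eval z := by
        rw [eval_finset_sum, Finset.sum_range]
        apply Finset.sum_congr rfl
        intro l _
        rw [eval_mul, mul_comm]
      rw [lhs] at this
      rw [this]
      simp only [Matrix.smul_apply, Matrix.one_apply, Fin.mk.injEq, smul_eq_mul]
      by_cases h : n1 = n2
      · rw [if_pos h, if_pos h, eval_mul, eval_C, eval_pow, eval_X, mul_one, hc]
      · rw [if_neg h, if_neg h, eval_zero, mul_zero]
    have hmulX : (∑ l ∈ Finset.range M, Fp (d l n2) N2 * Gp (d l n1) N2) * Polynomial.X =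
        (if n1 = n2 then Polynomial.C ((M : ℂ) * N2) * Polynomial.X ^ (N2 - 1) else 0) * Polynomial.X := by
      apply Polynomial.funext
      intro z
      rcases eq_or_ne z 0 with rfl | hz
      · rw [eval_mul, eval_mul, eval_X, mul_zero, mul_zero]
      · rw [eval_mul, eval_mul, evalid z hz]
    exact mul_right_cancel₀ Polynomial.X_ne_zero hmulX
  intro n1 hn1 n2 hn2 τ hτ
  rcases Nat.eq_zero_or_pos τ with rfl | hτ1
  · -- use coefficient N2-1 of col n2 n1
    have h := congrArg (fun p => p.coeff (N2 - 1)) (col n2 hn2 n1 hn1)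
    simp only [finset_sum_coeff] at h
    have step : ∀ l ∈ Finset.range M,
        (Fp (d l n1) N2 * Gp (d l n2) N2).coeff (N2 - 1) = aCorr (d l n1) (d l n2) N2 0 := by
      intro l _
      have := FG_coeff_lo (d l n1) (d l n2) N2 0 hN2
      rwa [Nat.sub_zero] at this
    rw [Finset.sum_congr rfl step] at h
    rw [h]
    by_cases h1 : n1 = n2
    · subst h1
      rw [if_pos rfl, coeff_C_mul, coeff_X_pow, if_pos rfl, mul_one, if_pos ⟨rfl, rfl⟩]
    · rw [if_neg (fun hh => h1 hh.symm), if_neg (fun hh => h1 hh.1)]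
      simp
  · have h := congrArg (fun p => p.coeff (N2 - 1 + τ)) (col n1 hn1 n2 hn2)
    simp only [finset_sum_coeff] at h
    have step : ∀ l ∈ Finset.range M,
        (Fp (d l n2) N2 * Gp (d l n1) N2).coeff (N2 - 1 + τ) =
          (starRingEnd ℂ) (aCorr (d l n1) (d l n2) N2 τ) :=
      fun l _ => FG_coeff_hi (d l n2) (d l n1) N2 τ hτ1 hτ
    rw [Finset.sum_congr rfl step, ← map_sum] at h
    have hcoe : (if n1 = n2 then Polynomial.C ((M : ℂ) * N2) * Polynomial.X ^ (N2 - 1)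
        else (0 : Polynomial ℂ)).coeff (N2 - 1 + τ) = 0 := by
      split_ifs with h1
      · rw [coeff_C_mul, coeff_X_pow, if_neg (by omega), mul_zero]
      · simp
    rw [hcoe] at h
    have := congrArg (starRingEnd ℂ) h
    rw [Complex.conj_conj, map_zero] at this
    rw [this, if_neg (by omega : ¬(n1 = n2 ∧ τ = 0))]
end

theorem statement15 (M N1 N2 : ℕ) (hM : 0 < M) (hN1 : 0 < N1) (hN2 : 0 < N2)
    (d : ℕ → ℕ → ℕ → ℂ)
    (hCCC : ∀ l1 < M, ∀ l2 < M, ∀ τ < N2,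
      ∑ n ∈ Finset.range M, aCorr (d l1 n) (d l2 n) N2 τ =
        if l1 = l2 ∧ τ = 0 then (M * N2 : ℂ) else 0)
    (x y : ℕ → ℂ) :
    ∀ n1 < M, ∀ n2 < M, ∀ k1 < N1, ∀ k2 < N2,
      ∑ l ∈ Finset.range M,
        aCorr (kron x (d l n1) N2) (kron y (d l n2) N2) (N1 * N2)
          (k1 * N2 + k2) =
        if n1 = n2 ∧ k2 = 0 then (M * N2 : ℂ) * aCorr x y N1 k1 else 0 := by
  intro n1 hn1 n2 hn2 k1 hk1 k2 hk2
  have T := transposeCCC M N2 d hM hN2 hCCC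
  set A := N1 - k1 with hAdef
  have hA : 1 ≤ A := by omega
  have hLen : N1 * N2 - (k1 * N2 + k2) = A * N2 - k2 := by
    have : A * N2 + k1 * N2 = N1 * N2 := by
      rw [← add_mul]; congr 1; omega
    omega
  have splitN2 : ∀ F : ℕ → ℂ, ∑ j ∈ Finset.range N2, F j =
      (∑ j ∈ Finset.range (N2 - k2), F j) + ∑ j ∈ Finset.Ico (N2 - k2) N2, F j := by
    intro F
    rw [Finset.range_eq_Ico, ← Finset.sum_Ico_consecutive F (Nat.zero_le _) (by omega : N2 - k2 ≤ N2),
      ← Finset.range_eq_Ico]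
  set P2 : ℕ → ℂ := fun l => ∑ j ∈ Finset.Ico (N2 - k2) N2,
    d l n1 j * (starRingEnd ℂ) (d l n2 (j + k2 - N2)) with hP2
  have main_l : ∀ l ∈ Finset.range M,
      aCorr (kron x (d l n1) N2) (kron y (d l n2) N2) (N1 * N2) (k1 * N2 + k2) =
        (∑ i ∈ Finset.range (A - 1), x i * (starRingEnd ℂ) (y (i + k1))) *
            aCorr (d l n1) (d l n2) N2 k2 +
          (∑ i ∈ Finset.range (A - 1), x i * (starRingEnd ℂ) (y (i + k1 + 1))) * P2 l +
          (x (A - 1) * (starRingEnd ℂ) (y (A - 1 + k1))) * aCorr (d l n1) (d l n2) N2 k2 := by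
    intro l _
    rw [aCorr, hLen, splitSum _ A N2 k2 hA (le_of_lt hk2)]
    have inner : ∀ i, (∑ j ∈ Finset.range N2,
        kron x (d l n1) N2 (i * N2 + j) *
          (starRingEnd ℂ) (kron y (d l n2) N2 (i * N2 + j + (k1 * N2 + k2)))) =
        (x i * (starRingEnd ℂ) (y (i + k1))) * aCorr (d l n1) (d l n2) N2 k2 +
          (x i * (starRingEnd ℂ) (y (i + k1 + 1))) * P2 l := by
      intro i
      rw [splitN2]
      congr 1
      · rw [aCorr, Finset.mul_sum]
        apply Finset.sum_congr rfl
        intro j hj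
        rw [Finset.mem_range] at hj
        rw [kron_apply x (d l n1) N2 hN2 i j (by omega)]
        have eidx : i * N2 + j + (k1 * N2 + k2) = (i + k1) * N2 + (j + k2) := by
          have : (i + k1) * N2 = i * N2 + k1 * N2 := by ring
          omega
        rw [eidx, kron_apply y (d l n2) N2 hN2 (i + k1) (j + k2) (by omega), map_mul]
        ring
      · rw [hP2, Finset.mul_sum]
        apply Finset.sum_congr rfl
        intro j hj
        rw [Finset.mem_Ico] at hj
        rw [kron_apply x (d l n1) N2 hN2 i j (by omega)]
        have eidx : i * N2 + j + (k1 * N2 + k2) = (i + k1 + 1) * N2 + (j + k2 - N2) := by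
          have : (i + k1 + 1) * N2 = i * N2 + k1 * N2 + N2 := by ring
          omega
        rw [eidx, kron_apply y (d l n2) N2 hN2 (i + k1 + 1) (j + k2 - N2) (by omega), map_mul]
        ring
    rw [Finset.sum_congr rfl (fun i _ => inner i), Finset.sum_add_distrib,
      ← Finset.sum_mul, ← Finset.sum_mul]
    congr 1
    rw [aCorr, Finset.mul_sum]
    apply Finset.sum_congr rfl
    intro j hj
    rw [Finset.mem_range] at hj
    rw [kron_apply x (d l n1) N2 hN2 (A - 1) j (by omega)]
    have eidx : (A - 1) * N2 + j + (k1 * N2 + k2) = (A - 1 + k1) * N2 + (j + k2) := by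
      have : (A - 1 + k1) * N2 = (A - 1) * N2 + k1 * N2 := by ring
      omega
    rw [eidx, kron_apply y (d l n2) N2 hN2 (A - 1 + k1) (j + k2) (by omega), map_mul]
    ring
  rw [Finset.sum_congr rfl main_l, Finset.sum_add_distrib, Finset.sum_add_distrib,
    ← Finset.mul_sum, ← Finset.mul_sum, ← Finset.mul_sum]
  have hS1 : ∑ l ∈ Finset.range M, aCorr (d l n1) (d l n2) N2 k2 =
      if n1 = n2 ∧ k2 = 0 then (M * N2 : ℂ) else 0 := T n1 hn1 n2 hn2 k2 hk2
  have hS2 : ∑ l ∈ Finset.range M, P2 l = 0 := by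
    rcases Nat.eq_zero_or_pos k2 with rfl | hk2p
    · simp [hP2]
    · have step : ∀ l ∈ Finset.range M, P2 l =
          (starRingEnd ℂ) (aCorr (d l n2) (d l n1) N2 (N2 - k2)) := by
        intro l _
        simp only [hP2, aCorr, map_sum, Finset.sum_Ico_eq_sum_range]
        apply Finset.sum_congr rfl
        intro j hj
        rw [Finset.mem_range] at hj
        rw [map_mul, Complex.conj_conj]
        have e1 : N2 - k2 + j + k2 - N2 = j := by omega
        have e2 : j + (N2 - k2) = N2 - k2 + j := by omega
        rw [e1, e2]
        ring
      rw [Finset.sum_congr rfl step, ← map_sum, T n2 hn2 n1 hn1 (N2 - k2) (by omega),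
        if_neg (by omega : ¬(n2 = n1 ∧ N2 - k2 = 0)), map_zero]
  rw [hS1, hS2, mul_zero, add_zero]
  have hsum : (∑ i ∈ Finset.range (A - 1), x i * (starRingEnd ℂ) (y (i + k1))) +
      x (A - 1) * (starRingEnd ℂ) (y (A - 1 + k1)) = aCorr x y N1 k1 := by
    rw [aCorr, ← hAdef, show A = (A - 1) + 1 by omega, Finset.sum_range_succ]
    simp only [Nat.add_sub_cancel]
  split_ifs with h
  · rw [← add_mul, hsum]; ring
  · rw [mul_zero, mul_zero, add_zero]
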